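/- arXiv:1805.02263 — 4 statements merged into one kernel-verified Lean document; each statement's English description precedes it below -/
import Mathlib

section
/- Let ϑ ∈ (0, π/6) and ρ₀ ∈ (0, 1). Define the region A = {w − t·e^{−iϑ} : w ∈ R, t ≥ 0}, where R = {x + iy : |x − 2| ≤ ρ₀/4, |y| ≤ (sin ϑ)·ρ₀/4} is a rectangle centered at 2. Then for every z ∈ A and every real r ≥ ρ₀, both |2 + r·e^{−iϑ} − z| ≥ (sin(ϑ)/4)·(r + ρ₀) and |r·e^{−iϑ} − z| ≥ (sin(ϑ)/4)·(r + ρ₀) hold. -/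
open Real Complex

/-- Key geometric estimate (3.15)–(3.17) in the proof of Lemma 3.4: for spectral
parameters `z` in the swept region `A` and `r ≥ ρ₀`, the distances to the points
`2 + e^{-iϑ}r` and `e^{-iϑ}r` of the cut spectrum are at least `(sin ϑ/4)(r + ρ₀)`. -/
theorem geometric_estimate_induction_basis
    (ϑ : ℝ) (hϑ : ϑ ∈ Set.Ioo 0 (π / 6))
    (ρ₀ : ℝ) (hρ₀ : ρ₀ ∈ Set.Ioo (0 : ℝ) 1)
    (z : ℂ)
    (hz : ∃ w : ℂ, (|w.re - 2| ≤ ρ₀ / 4 ∧ |w.im| ≤ Real.sin ϑ * ρ₀ / 4) ∧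
      ∃ t : ℝ, 0 ≤ t ∧ z = w - t * Complex.exp (-(ϑ * Complex.I)))
    (r : ℝ) (hr : ρ₀ ≤ r) :
    Real.sin ϑ / 4 * (r + ρ₀) ≤
        ‖2 + r * Complex.exp (-(ϑ * Complex.I)) - z‖ ∧
    Real.sin ϑ / 4 * (r + ρ₀) ≤
        ‖r * Complex.exp (-(ϑ * Complex.I)) - z‖ := by
  obtain ⟨w, ⟨hwre, hwim⟩, t, ht, rfl⟩ := hz
  have hπ : ϑ < Real.pi := lt_trans hϑ.2 (by linarith [Real.pi_pos])
  have hs : 0 < Real.sin ϑ := Real.sin_pos_of_pos_of_lt_pi hϑ.1 hπ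
  have hE : (Complex.exp (-(↑ϑ * Complex.I))).im = -Real.sin ϑ := by
    rw [show -((ϑ : ℂ) * Complex.I) = ((-ϑ : ℝ) : ℂ) * Complex.I by push_cast; ring,
      Complex.exp_ofReal_mul_I_im]
    exact Real.sin_neg ϑ
  have hv := abs_le.mp hwim
  have hρ := hρ₀.1
  have key : ∀ c : ℂ, c.im = 0 →
      Real.sin ϑ / 4 * (r + ρ₀) ≤
        ‖c + r * Complex.exp (-(ϑ * Complex.I))
          - (w - t * Complex.exp (-(ϑ * Complex.I)))‖ := by
    intro c hc
    refine le_trans ?_ (Complex.abs_im_le_norm _)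
    have him : (c + r * Complex.exp (-(ϑ * Complex.I))
        - (w - t * Complex.exp (-(ϑ * Complex.I)))).im
        = -(r + t) * Real.sin ϑ - w.im := by
      simp [hc, hE]
      ring
    rw [him]
    refine le_trans ?_ (neg_le_abs _)
    have h1 : Real.sin ϑ * ρ₀ ≤ Real.sin ϑ * r := by nlinarith
    have h2 : 0 ≤ Real.sin ϑ * t := mul_nonneg hs.le ht
    nlinarith
  constructor
  · exact key 2 (by simp)
  · have := key 0 (by simp)
    simpa using this
end

section
/- Let ϑ ∈ (0, π/6) and ρ₀ ∈ (0, 1). Define the region A = {w − t·e^{−iϑ} : w ∈ R, t ≥ 0}, where R = {x + iy : |x − 2| ≤ ρ₀/4, |y| ≤ (sin ϑ)·ρ₀/4} is a rectangle centered at 2. Then every z ∈ A satisfies |z| ≥ sin(ϑ); that is, the distance from the origin to A is at least sin(ϑ). -/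
open Real Complex

/-- Estimate dist(0, Ã_n) ≥ sin ϑ (equation (3.129)): every point of the swept
region `A` has absolute value at least `sin ϑ`. -/
theorem dist_origin_to_region
    (ϑ : ℝ) (hϑ : ϑ ∈ Set.Ioo 0 (π / 6))
    (ρ₀ : ℝ) (hρ₀ : ρ₀ ∈ Set.Ioo (0 : ℝ) 1)
    (z : ℂ)
    (hz : ∃ w : ℂ, (|w.re - 2| ≤ ρ₀ / 4 ∧ |w.im| ≤ Real.sin ϑ * ρ₀ / 4) ∧
      ∃ t : ℝ, 0 ≤ t ∧ z = w - t * Complex.exp (-(ϑ * Complex.I))) :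
    Real.sin ϑ ≤ ‖z‖ := by
  obtain ⟨w, ⟨hre, him⟩, t, ht, hzw⟩ := hz
  have hpi : (0:ℝ) < π := Real.pi_pos
  have hs : 0 < Real.sin ϑ :=
    Real.sin_pos_of_pos_of_lt_pi hϑ.1 (by linarith [hϑ.2])
  have hc : 0 ≤ Real.cos ϑ :=
    Real.cos_nonneg_of_mem_Icc ⟨by linarith [hϑ.1], by linarith [hϑ.2]⟩
  have hc1 : Real.cos ϑ ≤ 1 := Real.cos_le_one ϑ
  have hzre : z.re = w.re - t * Real.cos ϑ := by
    rw [hzw]; simp [Complex.exp_re]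
  have hzim : z.im = w.im + t * Real.sin ϑ := by
    rw [hzw]; simp [Complex.exp_im]
  -- the component of z along i e^{-iϑ} is independent of t and large
  have key : Real.sin ϑ ≤ z.re * Real.sin ϑ + z.im * Real.cos ϑ := by
    rw [hzre, hzim]
    have h1 : 2 - ρ₀ / 4 ≤ w.re := by
      have := abs_le.mp hre; linarith [this.1]
    have h2 : -(Real.sin ϑ * ρ₀ / 4) ≤ w.im := by
      have := abs_le.mp him; linarith [this.1]
    have hρ1 : ρ₀ ≤ 1 := le_of_lt hρ₀.2
    nlinarith [mul_nonneg (le_of_lt hρ₀.1) hs.le, mul_le_of_le_one_left hs.le hc1]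
  have habs : z.re * Real.sin ϑ + z.im * Real.cos ϑ ≤ ‖z‖ := by
    have hsq : (z.re * Real.sin ϑ + z.im * Real.cos ϑ)^2 ≤ (‖z‖)^2 := by
      have := Complex.sq_norm z
      have hpy := Real.sin_sq_add_cos_sq ϑ
      nlinarith [sq_nonneg (z.re * Real.cos ϑ - z.im * Real.sin ϑ), Complex.normSq_apply z]
    nlinarith [norm_nonneg z]
  linarith
end

section
/- Let ϑ ∈ (0, π/2), ρ > 0, and let w ∈ ℂ satisfy Im(w) ≥ −(sin(ϑ)/2)·ρ. Then for every real r ≥ ρ, |w − r·e^{−iϑ}| ≥ (sin(ϑ)/4)·(r + ρ). -/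
open Real Complex

/-- Geometric estimate (3.106) in the proof of Lemma 3.11: if `Im w ≥ -(sin ϑ/2)ρ`,
then the distance from `w` to any point `r·e^{-iϑ}` of the shifted ray with `r ≥ ρ`
is at least `(sin ϑ/4)(r + ρ)`. -/
theorem geometric_estimate_neumann
    (ϑ : ℝ) (hϑ : ϑ ∈ Set.Ioo 0 (π / 2))
    (ρ : ℝ) (hρ : 0 < ρ)
    (w : ℂ) (hw : -(Real.sin ϑ / 2) * ρ ≤ w.im)
    (r : ℝ) (hr : ρ ≤ r) :
    Real.sin ϑ / 4 * (r + ρ) ≤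
      ‖w - r * Complex.exp (-(ϑ * Complex.I))‖ := by
  obtain ⟨h0, h1⟩ := hϑ
  have hsin : 0 < Real.sin ϑ :=
    Real.sin_pos_of_pos_of_lt_pi h0 (lt_trans h1 (by linarith [Real.pi_pos]))
  have him : (w - r * Complex.exp (-(ϑ * Complex.I))).im = w.im + r * Real.sin ϑ := by
    have he : -((ϑ : ℂ) * Complex.I) = ((-ϑ : ℝ) : ℂ) * Complex.I := by push_cast; ring
    have h2 : (Complex.exp (-((ϑ:ℂ) * Complex.I))).im = -Real.sin ϑ := by
      rw [he, Complex.exp_ofReal_mul_I_im, Real.sin_neg]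
    simp [Complex.sub_im, Complex.mul_im, h2]
  have habs : (w - r * Complex.exp (-(ϑ * Complex.I))).im ≤
      ‖w - r * Complex.exp (-(ϑ * Complex.I))‖ :=
    le_trans (le_abs_self _) (Complex.abs_im_le_norm _)
  rw [him] at habs
  nlinarith [mul_nonneg hsin.le (sub_nonneg.2 hr)]
end

section
/- Let ϑ ∈ (0, π/2), ρ > 0, and let w ∈ ℂ satisfy Im(w) ≥ −(sin(ϑ)/2)·ρ. Then for every real r ≥ ρ, |r·e^{−iϑ} − w| ≥ (sin(ϑ)/4)·((sin(ϑ)/2)·ρ + |w|); equivalently, 1/|r·e^{−iϑ} − w| ≤ (4/sin(ϑ))·1/((sin(ϑ)/2)·ρ + |w|). -/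
open Real Complex

/-- Geometric core of Lemma 3.7 (equation (3.53)): for `w` with
`Im w ≥ -(sin ϑ/2)ρ` and `r ≥ ρ`, the distance from `w` to the shifted ray point
`r·e^{-iϑ}` is bounded below by `(sin ϑ/4)·((sin ϑ/2)ρ + |w|)`; equivalently the
reciprocal is bounded by `(4/sin ϑ)/((sin ϑ/2)ρ + |w|)`. -/
theorem geometric_core_invertibility_tilde
    (ϑ : ℝ) (hϑ : ϑ ∈ Set.Ioo 0 (π / 2))
    (ρ : ℝ) (hρ : 0 < ρ)
    (w : ℂ) (hw : -(Real.sin ϑ / 2) * ρ ≤ w.im)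
    (r : ℝ) (hr : ρ ≤ r) :
    Real.sin ϑ / 4 * (Real.sin ϑ / 2 * ρ + ‖w‖) ≤
        ‖(r * Complex.exp (-(ϑ * Complex.I)) - w)‖ ∧
    1 / ‖(r * Complex.exp (-(ϑ * Complex.I)) - w)‖ ≤
        4 / Real.sin ϑ * (1 / (Real.sin ϑ / 2 * ρ + ‖w‖)) := by
  obtain ⟨hϑ0, hϑ2⟩ := hϑ
  have hs0 : 0 < Real.sin ϑ :=
    Real.sin_pos_of_pos_of_lt_pi hϑ0 (by linarith [Real.pi_pos])
  have hs1 : Real.sin ϑ ≤ 1 := Real.sin_le_one ϑ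
  have hr0 : 0 < r := lt_of_lt_of_le hρ hr
  set s := Real.sin ϑ with hs
  set u : ℂ := (r : ℂ) * Complex.exp (-(ϑ * Complex.I)) with hu
  set M := ‖u - w‖ with hM
  set A := ‖w‖ with hA
  set y := w.im with hy
  have hA0 : 0 ≤ A := norm_nonneg w
  -- imaginary part of u
  have hexp : -((ϑ : ℂ) * Complex.I) = ((-ϑ : ℝ) : ℂ) * Complex.I := by
    push_cast; ring
  have him : u.im = -(r * s) := by
    have h0 : (Complex.exp (-((ϑ : ℂ) * Complex.I))).im = Real.sin (-ϑ) := by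
      rw [hexp]; exact Complex.exp_ofReal_mul_I_im _
    rw [hu, Complex.mul_im, h0, Real.sin_neg, hs]
    simp
  have habsu : ‖u‖ = r := by
    rw [hu, hexp, norm_mul, Complex.norm_real, Complex.norm_exp_ofReal_mul_I,
      mul_one, Real.norm_eq_abs, abs_of_pos hr0]
  -- M bounds from the imaginary part
  have h1 : r * s + y ≤ M := by
    have h := Complex.abs_im_le_norm (u - w)
    have h' : (u - w).im = -(r * s) - y := by
      rw [Complex.sub_im, him, hy]
    rw [h'] at h
    have h'' : -(-(r * s) - y) ≤ |(-(r * s) - y)| := neg_le_abs _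
    have : M = ‖u - w‖ := hM
    linarith
  have hM1 : s * ρ / 2 ≤ M := by nlinarith
  have hM2 : s * r / 2 ≤ M := by nlinarith
  -- |w| ≤ M + r
  have h2 : A ≤ M + r := by
    have := norm_sub_norm_le w u
    rw [norm_sub_rev] at this
    rw [habsu] at this
    rw [hA, hM]; linarith
  -- main inequality
  have key : s / 4 * (s / 2 * ρ + A) ≤ M := by
    nlinarith [mul_nonneg (mul_nonneg hs0.le (by linarith : (0:ℝ) ≤ s + 2))
        (by linarith : 0 ≤ M - s * ρ / 2),
      mul_nonneg (by linarith : (0:ℝ) ≤ 4 - s)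
        (by nlinarith : 0 ≤ (s + 2) * M - s * A),
      mul_nonneg (mul_nonneg hs0.le hA0) (by linarith : (0:ℝ) ≤ 1 - s),
      (by linarith : (0:ℝ) < s + 2)]
  refine ⟨key, ?_⟩
  have hden : 0 < s / 2 * ρ + A := by positivity
  have hM0 : 0 < M := lt_of_lt_of_le (by positivity) key
  have h3 : 1 / M ≤ 1 / (s / 4 * (s / 2 * ρ + A)) :=
    one_div_le_one_div_of_le (by positivity) key
  have heq : 1 / (s / 4 * (s / 2 * ρ + A)) = 4 / s * (1 / (s / 2 * ρ + A)) := by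
    field_simp
  linarith [heq ▸ h3]
end
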